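/- Let n ≥ 2 and let A_1, ..., A_n be n×n real matrices. Suppose there exists λ > 0 such that the operator norm ‖A_i - λ I_n‖ ≤ λ/4 for all i. Define B(u,v,w) = diag[u^T A_1 v, ..., u^T A_n v] w and G_B(u) = B(u,u,u)/|u| for u ≠ 0, G_B(0) = 0. Then G_B is monotone: (G_B(u) - G_B(v))·(u - v) ≥ 0 for all u, v ∈ ℝ^n. -/

import Mathlib

open Matrix Classical

/-- `B(u,v,w)` is the vector whose `i`-th component is `(uᵀ Aᵢ v) wᵢ`. -/
noncomputable def Bmap {n : ℕ} (A : Fin n → Matrix (Fin n) (Fin n) ℝ)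
    (u v w : EuclideanSpace ℝ (Fin n)) : EuclideanSpace ℝ (Fin n) :=
  WithLp.toLp 2 (fun i => (u ⬝ᵥ (A i).mulVec v) * w i)

/-- `G_B(u) = B(u,u,u)/|u|`, extended by `0` at the origin. -/
noncomputable def GB {n : ℕ} (A : Fin n → Matrix (Fin n) (Fin n) ℝ)
    (u : EuclideanSpace ℝ (Fin n)) : EuclideanSpace ℝ (Fin n) :=
  if u = 0 then 0 else ‖u‖⁻¹ • Bmap A u u u

noncomputable def hfun {n : ℕ} (M : Matrix (Fin n) (Fin n) ℝ)
    (u : EuclideanSpace ℝ (Fin n)) : ℝ :=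
  if u = 0 then 0 else ‖u‖⁻¹ * (u ⬝ᵥ M.mulVec u)

section aux
variable {n : ℕ} (M : Matrix (Fin n) (Fin n) ℝ)

lemma clm_apply (y : EuclideanSpace ℝ (Fin n)) (i : Fin n) :
    (Matrix.toEuclideanCLM (𝕜:=ℝ) M) y i = (M *ᵥ y) i := by
  have h := congrFun (Matrix.ofLp_toEuclideanCLM (𝕜:=ℝ) M y) i
  simpa [Matrix.toLin'_apply] using h

lemma dot_eq_inner (x y : EuclideanSpace ℝ (Fin n)) :
    x ⬝ᵥ M.mulVec y = @inner ℝ _ _ ((Matrix.toEuclideanCLM (𝕜:=ℝ) M) y) x := by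
  simp [PiLp.inner_apply, RCLike.inner_apply, dotProduct, clm_apply, mul_comm]

lemma dot_bound (x y : EuclideanSpace ℝ (Fin n)) :
    |x ⬝ᵥ M.mulVec y| ≤ ‖Matrix.toEuclideanCLM (𝕜:=ℝ) M‖ * ‖x‖ * ‖y‖ := by
  rw [dot_eq_inner]
  calc |@inner ℝ _ _ ((Matrix.toEuclideanCLM (𝕜:=ℝ) M) y) x|
      ≤ ‖(Matrix.toEuclideanCLM (𝕜:=ℝ) M) y‖ * ‖x‖ := abs_real_inner_le_norm _ _
    _ ≤ (‖Matrix.toEuclideanCLM (𝕜:=ℝ) M‖ * ‖y‖) * ‖x‖ := by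
        gcongr; exact (Matrix.toEuclideanCLM (𝕜:=ℝ) M).le_opNorm y
    _ = ‖Matrix.toEuclideanCLM (𝕜:=ℝ) M‖ * ‖x‖ * ‖y‖ := by ring

lemma dot_self_eq (x : EuclideanSpace ℝ (Fin n)) : x ⬝ᵥ x = ‖x‖^2 := by
  rw [← real_inner_self_eq_norm_sq]
  simp [PiLp.inner_apply, RCLike.inner_apply, dotProduct]
  rw [EuclideanSpace.norm_eq, Real.sq_sqrt (by positivity)]
  simp [Real.norm_eq_abs, sq]

variable {c : ℝ} (hc : ‖Matrix.toEuclideanCLM (𝕜:=ℝ) M‖ ≤ c)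
include hc

lemma dot_bound' (x y : EuclideanSpace ℝ (Fin n)) :
    |x ⬝ᵥ M.mulVec y| ≤ c * ‖x‖ * ‖y‖ := by
  refine (dot_bound M x y).trans ?_
  exact mul_le_mul_of_nonneg_right
    (mul_le_mul_of_nonneg_right hc (norm_nonneg x)) (norm_nonneg y)

lemma hfun_bound (u : EuclideanSpace ℝ (Fin n)) : |hfun M u| ≤ c * ‖u‖ := by
  have hc0 : 0 ≤ c := le_trans (norm_nonneg _) hc
  unfold hfun
  by_cases hu : u = 0
  · simp [hu]
  · rw [if_neg hu]
    have hn : (0:ℝ) < ‖u‖ := norm_pos_iff.mpr hu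
    rw [abs_mul, abs_of_pos (inv_pos.mpr hn)]
    have hQ := dot_bound' M hc u u
    rw [inv_mul_le_iff₀ hn]
    calc |u ⬝ᵥ M.mulVec u| ≤ c * ‖u‖ * ‖u‖ := hQ
      _ = ‖u‖ * (c * ‖u‖) := by ring

lemma hfun_lip_aux {u v : EuclideanSpace ℝ (Fin n)} (hu : u ≠ 0) (hv : v ≠ 0)
    (hba : ‖v‖ ≤ ‖u‖) : |hfun M u - hfun M v| ≤ 3 * c * ‖u - v‖ := by
  have hc0 : 0 ≤ c := le_trans (norm_nonneg _) hc
  have ha : (0:ℝ) < ‖u‖ := norm_pos_iff.mpr hu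
  have hb : (0:ℝ) < ‖v‖ := norm_pos_iff.mpr hv
  set a := ‖u‖ with hadef
  set b := ‖v‖ with hbdef
  set d := ‖u - v‖ with hddef
  have hd0 : 0 ≤ d := norm_nonneg _
  set Qu := u ⬝ᵥ M.mulVec u with hQu
  set Qv := v ⬝ᵥ M.mulVec v with hQv
  have key : hfun M u - hfun M v = (b * Qu - a * Qv) / (a * b) := by
    unfold hfun
    rw [if_neg hu, if_neg hv]
    field_simp
    ring
  have hsplit : Qu - Qv = u ⬝ᵥ M.mulVec (u - v) + (u - v) ⬝ᵥ M.mulVec v := by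
    rw [Matrix.mulVec_sub, dotProduct_sub, WithLp.ofLp_sub, sub_dotProduct]
    ring
  have hQ1 : |u ⬝ᵥ M.mulVec (u - v)| ≤ c * a * d := dot_bound' M hc u (u - v)
  have hQ2 : |(u - v) ⬝ᵥ M.mulVec v| ≤ c * d * b := dot_bound' M hc (u - v) v
  have hQv2 : |Qv| ≤ c * b * b := dot_bound' M hc v v
  have habd : |a - b| ≤ d := abs_norm_sub_norm_le u v
  have e : b * Qu - a * Qv
      = b * ((u ⬝ᵥ M.mulVec (u - v)) + ((u - v) ⬝ᵥ M.mulVec v)) + (b - a) * Qv := by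
    linear_combination b * hsplit
  have habs : |b * Qu - a * Qv| ≤ b * (c * a * d + c * d * b) + d * (c * b * b) := by
    rw [e]
    calc |b * ((u ⬝ᵥ M.mulVec (u - v)) + ((u - v) ⬝ᵥ M.mulVec v)) + (b - a) * Qv|
        ≤ |b * ((u ⬝ᵥ M.mulVec (u - v)) + ((u - v) ⬝ᵥ M.mulVec v))| + |(b - a) * Qv| :=
          abs_add_le _ _
      _ = b * |(u ⬝ᵥ M.mulVec (u - v)) + ((u - v) ⬝ᵥ M.mulVec v)| + |b - a| * |Qv| := by
          rw [abs_mul, abs_mul, abs_of_pos hb]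
      _ ≤ b * (|u ⬝ᵥ M.mulVec (u - v)| + |(u - v) ⬝ᵥ M.mulVec v|) + d * (c * b * b) := by
          gcongr
          · exact abs_add_le _ _
          · rw [abs_sub_comm]; exact habd
      _ ≤ b * (c * a * d + c * d * b) + d * (c * b * b) := by gcongr
  rw [key, abs_div, abs_of_pos (mul_pos ha hb), div_le_iff₀ (mul_pos ha hb)]
  nlinarith [mul_nonneg (mul_nonneg (mul_nonneg hc0 hd0) hb.le) (sub_nonneg.mpr hba)]

lemma hfun_lip (u v : EuclideanSpace ℝ (Fin n)) :
    |hfun M u - hfun M v| ≤ 3 * c * ‖u - v‖ := by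
  have hc0 : 0 ≤ c := le_trans (norm_nonneg _) hc
  have h0 : hfun M (0 : EuclideanSpace ℝ (Fin n)) = 0 := by simp [hfun]
  rcases le_total ‖v‖ ‖u‖ with hba | hba
  · by_cases hv : v = 0
    · subst hv
      rw [h0, sub_zero, sub_zero]
      refine (hfun_bound M hc u).trans ?_
      nlinarith [norm_nonneg u]
    · have hu : u ≠ 0 := by
        intro h; rw [h, norm_zero] at hba
        exact hv (norm_le_zero_iff.mp hba)
      exact hfun_lip_aux M hc hu hv hba
  · by_cases hu : u = 0
    · subst hu
      rw [h0, zero_sub, abs_neg, zero_sub, norm_neg]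
      refine (hfun_bound M hc v).trans ?_
      nlinarith [norm_nonneg v]
    · have hv : v ≠ 0 := by
        intro h; rw [h, norm_zero] at hba
        exact hu (norm_le_zero_iff.mp hba)
      rw [abs_sub_comm, norm_sub_rev]
      exact hfun_lip_aux M hc hv hu hba

end aux

lemma GB_apply {n : ℕ} (A : Fin n → Matrix (Fin n) (Fin n) ℝ) (lam : ℝ)
    (u : EuclideanSpace ℝ (Fin n)) (i : Fin n) :
    GB A u i = (lam * ‖u‖ + hfun (A i - lam • 1) u) * u i := by
  by_cases hu : u = 0
  · subst hu; simp [GB, hfun]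
  · have hn : (0:ℝ) < ‖u‖ := norm_pos_iff.mpr hu
    have hdecomp : u ⬝ᵥ (A i).mulVec u
        = u ⬝ᵥ (A i - lam • 1).mulVec u + lam * ‖u‖^2 := by
      rw [Matrix.sub_mulVec, dotProduct_sub, Matrix.smul_mulVec,
        Matrix.one_mulVec, dotProduct_smul, dot_self_eq]
      simp [smul_eq_mul]
    simp only [GB, if_neg hu, hfun, PiLp.smul_apply, smul_eq_mul]
    show ‖u‖⁻¹ * ((u ⬝ᵥ (A i).mulVec u) * u i) = _
    rw [hdecomp]
    have h' : ‖u‖⁻¹ * ‖u‖ = 1 := inv_mul_cancel₀ hn.ne'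
    linear_combination (lam * u i * ‖u‖) * h' 

set_option maxHeartbeats 1000000 in
theorem GB_monotone_of_near_identity {n : ℕ} (hn : 2 ≤ n)
    (A : Fin n → Matrix (Fin n) (Fin n) ℝ)
    (h : ∃ lam : ℝ, 0 < lam ∧ ∀ i,
      ‖Matrix.toEuclideanCLM (𝕜 := ℝ) (n := Fin n) (A i - lam • 1)‖ ≤ lam / 4) :
    ∀ u v : EuclideanSpace ℝ (Fin n), 0 ≤ @inner ℝ _ _ (GB A u - GB A v) (u - v) := by
  obtain ⟨lam, hlam, hA⟩ := h
  intro u v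
  set a := ‖u‖ with hadef
  set b := ‖v‖ with hbdef
  set d := ‖u - v‖ with hddef
  have ha0 : 0 ≤ a := norm_nonneg _
  have hb0 : 0 ≤ b := norm_nonneg _
  have hd0 : 0 ≤ d := norm_nonneg _
  set H : Fin n → EuclideanSpace ℝ (Fin n) → ℝ :=
    fun i x => hfun (A i - lam • 1) x with hHdef
  have hb' : ∀ i (x : EuclideanSpace ℝ (Fin n)), |H i x| ≤ (lam/4) * ‖x‖ :=
    fun i x => hfun_bound _ (hA i) x
  have hl : ∀ i, |H i u - H i v| ≤ 3 * (lam/4) * d :=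
    fun i => hfun_lip _ (hA i) u v
  -- sums of squares
  have nsq : ∀ w : EuclideanSpace ℝ (Fin n), ∑ i, (w i)^2 = ‖w‖^2 := by
    intro w
    rw [← dot_self_eq w]
    simp [dotProduct, sq]
  have hD : ∑ i, (u i - v i)^2 = d^2 := by
    rw [hddef, ← nsq (u - v)]
    exact Finset.sum_congr rfl fun i _ => rfl
  -- expansion of the inner product
  have expand : @inner ℝ _ _ (GB A u - GB A v) (u - v)
      = ∑ i, (GB A u i - GB A v i) * (u i - v i) := by
    simp [PiLp.inner_apply, RCLike.inner_apply, PiLp.sub_apply]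
    exact Finset.sum_congr rfl fun i _ => mul_comm _ _
  have point : ∀ i, (GB A u i - GB A v i) * (u i - v i)
      = ((lam * a + lam * b)/2) * (u i - v i)^2
      + ((lam * a - lam * b)/2) * ((u i)^2 - (v i)^2)
      + ((H i u + H i v)/2) * (u i - v i)^2
      + ((H i u - H i v)/2) * ((u i + v i) * (u i - v i)) := by
    intro i
    rw [GB_apply A lam u i, GB_apply A lam v i]
    ring
  rw [expand]
  have split : ∑ i, (GB A u i - GB A v i) * (u i - v i)
      = (∑ i, ((lam * a + lam * b)/2) * (u i - v i)^2)
      + (∑ i, ((lam * a - lam * b)/2) * ((u i)^2 - (v i)^2))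
      + (∑ i, ((H i u + H i v)/2) * (u i - v i)^2)
      + (∑ i, ((H i u - H i v)/2) * ((u i + v i) * (u i - v i))) := by
    rw [← Finset.sum_add_distrib, ← Finset.sum_add_distrib, ← Finset.sum_add_distrib]
    exact Finset.sum_congr rfl fun i _ => point i
  rw [split]
  -- Term 1
  have hT1 : (∑ i, ((lam * a + lam * b)/2) * (u i - v i)^2)
      = ((lam * a + lam * b)/2) * d^2 := by
    rw [← Finset.mul_sum, hD]
  -- Term 2
  have hT2 : (∑ i, ((lam * a - lam * b)/2) * ((u i)^2 - (v i)^2))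
      = ((lam * a - lam * b)/2) * (a^2 - b^2) := by
    rw [← Finset.mul_sum, Finset.sum_sub_distrib, nsq u, nsq v]
  have hT2nn : 0 ≤ ((lam * a - lam * b)/2) * (a^2 - b^2) := by
    nlinarith [sq_nonneg (a - b), add_nonneg ha0 hb0, hlam.le,
      mul_nonneg (mul_nonneg hlam.le (sq_nonneg (a-b))) (add_nonneg ha0 hb0)]
  -- Term 3
  have hT3 : -((lam/8) * (a + b) * d^2)
      ≤ ∑ i, ((H i u + H i v)/2) * (u i - v i)^2 := by
    have : ∀ i ∈ Finset.univ, (-((lam/8) * (a + b))) * (u i - v i)^2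
        ≤ ((H i u + H i v)/2) * (u i - v i)^2 := by
      intro i _
      have h1 := abs_le.mp (hb' i u)
      have h2 := abs_le.mp (hb' i v)
      have : -((lam/8) * (a + b)) ≤ (H i u + H i v)/2 := by
        rw [← hadef] at h1; rw [← hbdef] at h2
        linarith [h1.1, h2.1]
      exact mul_le_mul_of_nonneg_right this (sq_nonneg _)
    calc -((lam/8) * (a + b) * d^2)
        = ∑ i, (-((lam/8) * (a + b))) * (u i - v i)^2 := by
          rw [← Finset.mul_sum, hD]; ring
      _ ≤ _ := Finset.sum_le_sum this
  -- Term 4 with Cauchy-Schwarz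
  set s := ∑ i, |u i + v i| * |u i - v i| with hsdef
  have hs0 : 0 ≤ s := Finset.sum_nonneg fun i _ =>
    mul_nonneg (abs_nonneg _) (abs_nonneg _)
  have hsum_add : ∑ i, (u i + v i)^2 = ‖u + v‖^2 := by
    rw [← nsq (u + v)]
    exact Finset.sum_congr rfl fun i _ => rfl
  have hs : s ≤ ‖u + v‖ * d := by
    have hcs := Finset.sum_mul_sq_le_sq_mul_sq Finset.univ
      (fun i => |u i + v i|) (fun i => |u i - v i|)
    simp only [sq_abs] at hcs
    rw [hsum_add, hD] at hcs
    refine le_of_pow_le_pow_left₀ two_ne_zero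
      (mul_nonneg (norm_nonneg _) hd0) ?_
    calc s^2 ≤ ‖u + v‖^2 * d^2 := hcs
      _ = (‖u + v‖ * d)^2 := by ring
  have hT4 : -((3*lam/8) * d * s)
      ≤ ∑ i, ((H i u - H i v)/2) * ((u i + v i) * (u i - v i)) := by
    have : ∀ i ∈ Finset.univ, (-((3*lam/8) * d)) * (|u i + v i| * |u i - v i|)
        ≤ ((H i u - H i v)/2) * ((u i + v i) * (u i - v i)) := by
      intro i _
      have habs : |((H i u - H i v)/2) * ((u i + v i) * (u i - v i))|
          ≤ ((3*lam/8) * d) * (|u i + v i| * |u i - v i|) := by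
        rw [abs_mul, abs_mul, abs_div, abs_two]
        have h8 : |H i u - H i v| / 2 ≤ (3*lam/8) * d := by linarith [hl i]
        exact mul_le_mul_of_nonneg_right h8
          (mul_nonneg (abs_nonneg _) (abs_nonneg _))
      calc (-((3*lam/8) * d)) * (|u i + v i| * |u i - v i|)
          = -(((3*lam/8) * d) * (|u i + v i| * |u i - v i|)) := by ring
        _ ≤ -|((H i u - H i v)/2) * ((u i + v i) * (u i - v i))| := by
            exact neg_le_neg habs
        _ ≤ _ := neg_abs_le _
    calc -((3*lam/8) * d * s)
        = ∑ i, (-((3*lam/8) * d)) * (|u i + v i| * |u i - v i|) := by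
          rw [← Finset.mul_sum, hsdef]; ring
      _ ≤ _ := Finset.sum_le_sum this
  have hnormadd : ‖u + v‖ ≤ a + b := norm_add_le u v
  have hfinal : -((3*lam/8) * d * s) ≥ -((3*lam/8) * (a+b) * d^2) := by
    have h1 : (3*lam/8) * d * s ≤ (3*lam/8) * d * (‖u + v‖ * d) := by
      apply mul_le_mul_of_nonneg_left hs
      positivity
    have h2 : (3*lam/8) * d * (‖u + v‖ * d) ≤ (3*lam/8) * (a+b) * d^2 := by
      have hh : ‖u + v‖ * d ≤ (a+b) * d := mul_le_mul_of_nonneg_right hnormadd hd0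
      have h2' := mul_le_mul_of_nonneg_left hh (show (0:ℝ) ≤ 3*lam/8*d by positivity)
      nlinarith [h2']
    linarith
  rw [hT1, hT2]
  nlinarith [hT3, hT4, hfinal, hT2nn, mul_nonneg (mul_nonneg hlam.le (add_nonneg ha0 hb0)) (sq_nonneg d)]
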